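/- (Deterministic DILAND-type convergence.) Let P ∈ ℝ^{N×N} be entrywise nonnegative with maximum row sum γ < 1, let c ∈ ℝ^{N×m}, and let x* = (I − P)^{-1} c be the unique solution of x = P x + c. Let (α_k)_{k≥0} satisfy α_k ∈ (0,1] for all k and ∑_k α_k = ∞. Then for every initial condition x_0 ∈ ℝ^{N×m}, the iterates x_{k+1} = (1 − α_k) x_k + α_k (P x_k + c) converge to x* as k → ∞. -/

import Mathlib

open Filter

theorem diland_aux (β : ℝ) (hβ : 0 < β) (α : ℕ → ℝ)
    (hdiv : Tendsto (fun n => ∑ k ∈ Finset.range n, α k) atTop atTop)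
    (d : ℕ → ℝ) (hd : ∀ k, 0 ≤ d k)
    (hstep : ∀ k, d (k + 1) ≤ (1 - β * α k) * d k) :
    Tendsto d atTop (nhds 0) := by
  have key : ∀ n, d n ≤ Real.exp (-(β * ∑ k ∈ Finset.range n, α k)) * d 0 := by
    intro n
    induction n with
    | zero => simp
    | succ n ih =>
      have h2 : (1 - β * α n) ≤ Real.exp (-(β * α n)) := by
        have := Real.add_one_le_exp (-(β * α n))
        linarith
      calc d (n + 1) ≤ (1 - β * α n) * d n := hstep n
        _ ≤ Real.exp (-(β * α n)) * d n := mul_le_mul_of_nonneg_right h2 (hd n)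
        _ ≤ Real.exp (-(β * α n)) * (Real.exp (-(β * ∑ k ∈ Finset.range n, α k)) * d 0) :=
            mul_le_mul_of_nonneg_left ih (Real.exp_nonneg _)
        _ = Real.exp (-(β * ∑ k ∈ Finset.range (n + 1), α k)) * d 0 := by
            rw [← mul_assoc, ← Real.exp_add, Finset.sum_range_succ]
            ring_nf
  have hlim : Tendsto (fun n => Real.exp (-(β * ∑ k ∈ Finset.range n, α k)) * d 0)
      atTop (nhds 0) := by
    have h2 : Tendsto (fun n => -(β * ∑ k ∈ Finset.range n, α k)) atTop atBot :=
      tendsto_neg_atTop_atBot.comp (hdiv.const_mul_atTop hβ)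
    simpa using (Real.tendsto_exp_atBot.comp h2).mul_const (d 0)
  exact squeeze_zero hd key hlim


/-- Deterministic DILAND-type convergence (noise-free core of Theorem 3, Eq. (23)):
for a nonnegative matrix `P` with maximum row sum `γ < 1`, the iterates
`x_{k+1} = (1 - α_k) x_k + α_k (P x_k + c)` with persistence weights `α_k ∈ (0,1]`,
`∑ α_k = ∞`, converge to the unique fixed point `x* = (I - P)⁻¹ c` from every
initial condition. -/
theorem diland_deterministic_converges {N m : ℕ} (P : Matrix (Fin N) (Fin N) ℝ)
    (γ : ℝ) (hP : ∀ i j, 0 ≤ P i j) (hrow : ∀ i, ∑ j, P i j ≤ γ) (hγ : γ < 1)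
    (c : Matrix (Fin N) (Fin m) ℝ)
    (xstar : Matrix (Fin N) (Fin m) ℝ)
    (hxstar : xstar = ((1 : Matrix (Fin N) (Fin N) ℝ) - P)⁻¹ * c)
    (α : ℕ → ℝ) (hα : ∀ k, α k ∈ Set.Ioc (0 : ℝ) 1)
    (hdiv : Tendsto (fun n => ∑ k ∈ Finset.range n, α k) atTop atTop)
    (x : ℕ → Matrix (Fin N) (Fin m) ℝ)
    (hrec : ∀ k, x (k + 1) = (1 - α k) • x k + α k • (P * x k + c)) :
    Tendsto x atTop (nhds xstar) := by
  -- trivial cases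
  rcases Nat.eq_zero_or_pos N with hN | hN
  · have hx : ∀ k, x k = xstar := by
      intro k; funext i j; exact absurd i.2 (by omega)
    exact tendsto_const_nhds.congr fun k => (hx k).symm
  rcases Nat.eq_zero_or_pos m with hm | hm
  · have hx : ∀ k, x k = xstar := by
      intro k; funext i j; exact absurd j.2 (by omega)
    exact tendsto_const_nhds.congr fun k => (hx k).symm
  have i0 : Fin N := ⟨0, hN⟩
  have hγ0 : (0 : ℝ) ≤ γ :=
    le_trans (Finset.sum_nonneg fun j _ => hP i0 j) (hrow i0)
  -- invertibility of 1 - P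
  have hdet : IsUnit ((1 : Matrix (Fin N) (Fin N) ℝ) - P).det := by
    rw [isUnit_iff_ne_zero]
    intro hzero
    obtain ⟨v, hv, hveq⟩ := (Matrix.exists_mulVec_eq_zero_iff).mpr hzero
    have hvP : ∀ i, v i = ∑ j, P i j * v j := by
      intro i
      have := congrFun hveq i
      simp [Matrix.mulVec, dotProduct, Matrix.sub_apply, Matrix.one_apply, sub_mul,
        Finset.sum_sub_distrib] at this
      linarith [this]
    obtain ⟨i, -, hi⟩ := Finset.exists_max_image Finset.univ (fun i => |v i|)
      ⟨i0, Finset.mem_univ _⟩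
    have hipos : 0 < |v i| := by
      obtain ⟨j, hj⟩ := Function.ne_iff.mp hv
      exact lt_of_lt_of_le (abs_pos.mpr hj) (hi j (Finset.mem_univ _))
    have hbound : |v i| ≤ γ * |v i| := by
      calc |v i| = |∑ j, P i j * v j| := by rw [← hvP i]
        _ ≤ ∑ j, |P i j * v j| := Finset.abs_sum_le_sum_abs _ _
        _ = ∑ j, P i j * |v j| := by
            refine Finset.sum_congr rfl fun j _ => ?_
            rw [abs_mul, abs_of_nonneg (hP i j)]
        _ ≤ ∑ j, P i j * |v i| := by
            refine Finset.sum_le_sum fun j _ => ?_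
            exact mul_le_mul_of_nonneg_left (hi j (Finset.mem_univ _)) (hP i j)
        _ = (∑ j, P i j) * |v i| := by rw [Finset.sum_mul]
        _ ≤ γ * |v i| := mul_le_mul_of_nonneg_right (hrow i) (abs_nonneg _)
    nlinarith
  -- fixed point equation
  have hfix : xstar = P * xstar + c := by
    have h1 : ((1 : Matrix (Fin N) (Fin N) ℝ) - P) * xstar = c := by
      rw [hxstar, Matrix.mul_nonsing_inv_cancel_left _ _ hdet]
    have h2 : xstar - P * xstar = c := by
      rw [← h1, Matrix.sub_mul, Matrix.one_mul]
    linear_combination (norm := module) h2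
  -- error recursion
  have he : ∀ k, x (k + 1) - xstar
      = (1 - α k) • (x k - xstar) + α k • (P * (x k - xstar)) := by
    intro k
    have h2 : xstar - P * xstar = c := by
      nth_rewrite 1 [hfix]; module
    rw [hrec k, Matrix.mul_sub]
    linear_combination (norm := module) (-(α k)) • h2
  -- sup of entrywise errors
  have hne : (Finset.univ : Finset (Fin N × Fin m)).Nonempty :=
    ⟨(i0, ⟨0, hm⟩), Finset.mem_univ _⟩
  set d : ℕ → ℝ := fun k =>
    Finset.univ.sup' hne (fun p : Fin N × Fin m => |x k p.1 p.2 - xstar p.1 p.2|) with hd_def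
  have hentry : ∀ k i j, |x k i j - xstar i j| ≤ d k := by
    intro k i j
    simp only [hd_def]
    exact Finset.le_sup' (fun p : Fin N × Fin m => |x k p.1 p.2 - xstar p.1 p.2|)
      (Finset.mem_univ (i, j))
  have hdnn : ∀ k, 0 ≤ d k := fun k =>
    le_trans (abs_nonneg _) (hentry k i0 ⟨0, hm⟩)
  have hstep : ∀ k, d (k + 1) ≤ (1 - (1 - γ) * α k) * d k := by
    intro k
    simp only [hd_def]
    apply Finset.sup'_le
    rintro ⟨i, j⟩ -
    have hα1 := (hα k).1
    have hα2 := (hα k).2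
    have hPe : |(P * (x k - xstar)) i j| ≤ γ * d k := by
      calc |(P * (x k - xstar)) i j| = |∑ l, P i l * (x k l j - xstar l j)| := by
            simp [Matrix.mul_apply, Matrix.sub_apply]
        _ ≤ ∑ l, |P i l * (x k l j - xstar l j)| := Finset.abs_sum_le_sum_abs _ _
        _ = ∑ l, P i l * |x k l j - xstar l j| := by
            refine Finset.sum_congr rfl fun l _ => ?_
            rw [abs_mul, abs_of_nonneg (hP i l)]
        _ ≤ ∑ l, P i l * d k := by
            refine Finset.sum_le_sum fun l _ => ?_
            exact mul_le_mul_of_nonneg_left (hentry k l j) (hP i l)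
        _ = (∑ l, P i l) * d k := by rw [Finset.sum_mul]
        _ ≤ γ * d k := mul_le_mul_of_nonneg_right (hrow i) (hdnn k)
    have hxv : x (k + 1) i j - xstar i j
        = (1 - α k) * (x k i j - xstar i j) + α k * (P * (x k - xstar)) i j := by
      have := congrFun (congrFun (he k) i) j
      simpa [Matrix.add_apply, Matrix.smul_apply, Matrix.sub_apply, smul_eq_mul] using this
    calc |x (k + 1) i j - xstar i j|
        ≤ (1 - α k) * |x k i j - xstar i j| + α k * |(P * (x k - xstar)) i j| := by
          rw [hxv]
          refine le_trans (abs_add_le _ _) ?_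
          rw [abs_mul, abs_mul, abs_of_nonneg (by linarith : (0:ℝ) ≤ 1 - α k),
            abs_of_nonneg (le_of_lt hα1)]
      _ ≤ (1 - α k) * d k + α k * (γ * d k) := by
          have h1 : (1 - α k) * |x k i j - xstar i j| ≤ (1 - α k) * d k :=
            mul_le_mul_of_nonneg_left (hentry k i j) (by linarith)
          have h2 : α k * |(P * (x k - xstar)) i j| ≤ α k * (γ * d k) :=
            mul_le_mul_of_nonneg_left hPe (le_of_lt hα1)
          linarith
      _ = (1 - (1 - γ) * α k) * d k := by ring
  -- conclude
  have hd0 : Tendsto d atTop (nhds 0) :=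
    diland_aux (1 - γ) (by linarith) α hdiv d hdnn
      (fun k => by simpa [mul_comm] using hstep k)
  refine tendsto_pi_nhds.mpr ?_
  intro i
  rw [tendsto_pi_nhds]
  intro j
  have hsq : Tendsto (fun k => x k i j - xstar i j) atTop (nhds 0) :=
    squeeze_zero_norm (fun k => by simpa using hentry k i j) hd0
  have := hsq.add_const (xstar i j)
  simpa using this
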